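/- For every coloring f : [ℕ]^{!ω} → ℕ there exists a coloring g : [ℕ]^{!ω} → {0,1} such that for every infinite set H ⊆ ℕ \ {0} on which g is constant on [H]^{!ω}, the set {x − 1 : x ∈ H} is free for f. -/
import Mathlib


/-- A finite set `s ⊆ ℕ` is exactly ω-large if `|s| = 1 + min s`. -/
def ExLarge (s : Finset ℕ) : Prop :=
  s.Nonempty ∧ s.card = 1 + sInf (↑s : Set ℕ)

/-- `H` is free for `f : [ℕ]^{!ω} → ℕ` if for every exactly ω-large `s ⊆ H`,
if `f s ∈ H` then `f s ∈ s`. -/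
def FreeL (f : Finset ℕ → ℕ) (H : Set ℕ) : Prop :=
  ∀ s : Finset ℕ, ExLarge s → ↑s ⊆ H → f s ∈ H → f s ∈ s

/-- A canonical choice of (at most) `k` elements of `A`. -/
def lowK (A : Finset ℕ) (k : ℕ) : Finset ℕ := ((A.sort (· ≤ ·)).take k).toFinset

lemma lowK_subset (A : Finset ℕ) (k : ℕ) : lowK A k ⊆ A := by
  intro x hx
  rw [lowK, List.mem_toFinset] at hx
  exact (Finset.mem_sort _).1 (List.take_subset _ _ hx)

lemma lowK_card (A : Finset ℕ) (k : ℕ) (h : k ≤ A.card) : (lowK A k).card = k := by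
  rw [lowK, List.toFinset_card_of_nodup
    ((List.take_sublist _ _).nodup (Finset.sort_nodup _ _)),
    List.length_take, Finset.length_sort]
  omega

open Classical in
/-- The recursive coloring, with fuel as first argument. -/
noncomputable def go (f : Finset ℕ → ℕ) : ℕ → Finset ℕ → Fin 2
  | 0, _ => 0
  | n+1, t =>
    if f ((t.erase (t.sup id)).image (· - 1)) + 1 ∉ t ∧
        f ((t.erase (t.sup id)).image (· - 1)) + 2 ≤ t.sup id then
      1 - (if f ((t.erase (t.sup id)).image (· - 1)) + 2 ≤ sInf (↑t : Set ℕ) then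
            go f n (insert (f ((t.erase (t.sup id)).image (· - 1)) + 1)
              (lowK ((t.erase (sInf (↑t : Set ℕ))).erase (t.sup id))
                (f ((t.erase (t.sup id)).image (· - 1)) + 1)))
          else
            go f n (insert (f ((t.erase (t.sup id)).image (· - 1)) + 1) (t.erase (t.sup id))))
    else 0

lemma sup_lt_aux {t : Finset ℕ} {b : ℕ} (X : Finset ℕ)
    (hX : ∀ x ∈ X, x ∈ t ∧ x ≠ t.sup id) (hb : b + 2 ≤ t.sup id) :
    (insert (b+1) X).sup id < t.sup id := by
  have h0 : (⊥ : ℕ) < t.sup id := by simp only [bot_eq_zero]; omega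
  rw [Finset.sup_lt_iff h0]
  intro e he
  rcases Finset.mem_insert.1 he with rfl | he
  · simp only [id]; omega
  · obtain ⟨h1, h2⟩ := hX e he
    exact lt_of_le_of_ne (Finset.le_sup (f := id) h1) h2

lemma go_congr (f : Finset ℕ → ℕ) :
    ∀ n m t, t.sup id < n → t.sup id < m → go f n t = go f m t := by
  intro n
  induction n with
  | zero => intro m t h; exact absurd h (Nat.not_lt_zero _)
  | succ n ih =>
    intro m t hn hm
    match m, hm with
    | m+1, hm =>
      simp only [go]
      set b := f ((t.erase (t.sup id)).image (· - 1)) with hb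
      by_cases h : b + 1 ∉ t ∧ b + 2 ≤ t.sup id
      · rw [if_pos h, if_pos h]
        congr 1
        by_cases h2 : b + 2 ≤ sInf (↑t : Set ℕ)
        · rw [if_pos h2, if_pos h2]
          have hsup : (insert (b+1) (lowK ((t.erase (sInf (↑t : Set ℕ))).erase (t.sup id))
              (b+1))).sup id < t.sup id := by
            apply sup_lt_aux _ _ h.2
            intro x hx
            have := lowK_subset _ _ hx
            have h1 := Finset.mem_erase.1 this
            exact ⟨(Finset.mem_erase.1 h1.2).2, h1.1⟩
          exact ih _ _ (by omega) (by omega)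
        · rw [if_neg h2, if_neg h2]
          have hsup : (insert (b+1) (t.erase (t.sup id))).sup id < t.sup id := by
            apply sup_lt_aux _ _ h.2
            intro x hx
            have h1 := Finset.mem_erase.1 hx
            exact ⟨h1.2, h1.1⟩
          exact ih _ _ (by omega) (by omega)
      · rw [if_neg h, if_neg h]

/-- For every `f : [ℕ]^{!ω} → ℕ` there is `g : [ℕ]^{!ω} → 2` such
that for every infinite `H ⊆ ℕ \ {0}` on which `g` is constant on `[H]^{!ω}`,
the set `{x - 1 : x ∈ H}` is free for `f`. -/
theorem stmt4 (f : Finset ℕ → ℕ) :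
    ∃ g : Finset ℕ → Fin 2,
      ∀ H : Set ℕ, H.Infinite → 0 ∉ H →
        (∃ c : Fin 2, ∀ s : Finset ℕ, ExLarge s → ↑s ⊆ H → g s = c) →
        FreeL f ((fun x => x - 1) '' H) := by
  classical
  refine ⟨fun t => go f (t.sup id + 1) t, ?_⟩
  rintro H Hinf H0 ⟨c, hc⟩ s hs hsub hfs
  set b := f s with hbdef
  -- membership facts
  have hmem : ∀ x ∈ s, x + 1 ∈ H := by
    intro x hx
    obtain ⟨a, haH, ha⟩ := hsub hx
    have ha0 : a ≠ 0 := fun h => H0 (h ▸ haH)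
    have ha' : a - 1 = x := ha
    have : a = x + 1 := by omega
    exact this ▸ haH
  have hbH : b + 1 ∈ H := by
    obtain ⟨a, haH, ha⟩ := hfs
    have ha0 : a ≠ 0 := fun h => H0 (h ▸ haH)
    have ha' : a - 1 = b := ha
    have : a = b + 1 := by omega
    exact this ▸ haH
  by_contra hbs
  obtain ⟨hne, hcard⟩ := hs
  set m0 := sInf (↑s : Set ℕ) with hm0
  have hm0s : m0 ∈ s := by
    have : (↑s : Set ℕ).Nonempty := ⟨hne.choose, hne.choose_spec⟩
    exact Nat.sInf_mem this
  have hm0le : ∀ x ∈ s, m0 ≤ x := fun x hx => Nat.sInf_le hx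
  have hbne : b ≠ m0 := fun h => hbs (h ▸ hm0s)
  -- pick a big element
  obtain ⟨N, hNH, hNgt⟩ := Hinf.exists_gt (max (s.sup id + 1) (b + 1))
  have hN1 : 1 ≤ N := by omega
  set M := N - 1 with hMdef
  have hM1 : M + 1 = N := by omega
  have hMs : ∀ x ∈ s, x < M := by
    intro x hx
    have := Finset.le_sup (f := id) hx
    simp only [id] at this
    omega
  have hbM : b < M := by omega
  set T := insert (M+1) (s.image (· + 1)) with hTdef
  have hMnotim : M + 1 ∉ s.image (· + 1) := by
    simp only [Finset.mem_image, not_exists]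
    rintro x ⟨hx, hx1⟩
    have := hMs x hx; omega
  have hTmem : ∀ y, y ∈ T ↔ y = M + 1 ∨ ∃ x ∈ s, y = x + 1 := by
    intro y
    simp only [hTdef, Finset.mem_insert, Finset.mem_image]
    constructor
    · rintro (h | ⟨x, hx, rfl⟩)
      · exact Or.inl h
      · exact Or.inr ⟨x, hx, rfl⟩
    · rintro (h | ⟨x, hx, rfl⟩)
      · exact Or.inl h
      · exact Or.inr ⟨x, hx, rfl⟩
  have hsupT : T.sup id = M + 1 := by
    apply le_antisymm
    · apply Finset.sup_le
      intro y hy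
      rcases (hTmem y).1 hy with rfl | ⟨x, hx, rfl⟩
      · exact le_rfl
      · have := hMs x hx; simp only [id]; omega
    · exact Finset.le_sup (f := id) (Finset.mem_insert_self _ _)
  have heraseT : T.erase (T.sup id) = s.image (· + 1) := by
    rw [hsupT, hTdef, Finset.erase_insert hMnotim]
  have himim : (s.image (· + 1)).image (· - 1) = s := by
    rw [Finset.image_image]
    have : ((· - 1) ∘ (· + 1) : ℕ → ℕ) = id := by
      funext x; simp
    rw [this, Finset.image_id]
  have hbT : f ((T.erase (T.sup id)).image (· - 1)) = b := by
    rw [heraseT, himim]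
  have hscard : s.card = m0 + 1 := by omega
  have hminT : sInf (↑T : Set ℕ) = m0 + 1 := by
    apply le_antisymm
    · apply Nat.sInf_le
      show m0 + 1 ∈ T
      exact (hTmem _).2 (Or.inr ⟨m0, hm0s, rfl⟩)
    · have hmemInf : sInf (↑T : Set ℕ) ∈ (↑T : Set ℕ) :=
        Nat.sInf_mem ⟨M+1, by exact_mod_cast (hTmem _).2 (Or.inl rfl)⟩
      rcases (hTmem _).1 (by exact_mod_cast hmemInf) with h | ⟨x, hx, h⟩
      · have := hMs m0 hm0s; omega
      · have := hm0le x hx; omega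
  have hcond : b + 1 ∉ T ∧ b + 2 ≤ T.sup id := by
    constructor
    · intro hmem'
      rcases (hTmem _).1 hmem' with h | ⟨x, hx, h⟩
      · omega
      · have : b = x := by omega
        exact hbs (this ▸ hx)
    · rw [hsupT]; omega
  have hTH : ↑T ⊆ H := by
    intro y hy
    rcases (hTmem y).1 (by exact_mod_cast hy) with rfl | ⟨x, hx, rfl⟩
    · exact hM1 ▸ hNH
    · exact hmem x hx
  have hTcard : T.card = m0 + 2 := by
    rw [hTdef, Finset.card_insert_of_notMem hMnotim,
      Finset.card_image_of_injective _ (add_left_injective 1), hscard]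
  have hTxl : ExLarge T := by
    refine ⟨⟨M+1, Finset.mem_insert_self _ _⟩, ?_⟩
    rw [hTcard, hminT]; omega
  -- unfold g at T
  have hgT0 : go f (T.sup id + 1) T =
      1 - (if b + 2 ≤ sInf (↑T : Set ℕ) then
            go f (T.sup id) (insert (b + 1)
              (lowK ((T.erase (sInf (↑T : Set ℕ))).erase (T.sup id)) (b + 1)))
          else
            go f (T.sup id) (insert (b + 1) (T.erase (T.sup id)))) := by
    simp only [go, hbT]
    rw [if_pos hcond]
  have hgTc : go f (T.sup id + 1) T = c := hc T hTxl hTH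
  -- common final contradiction given a suitable T̂
  have key : ∀ That : Finset ℕ, ExLarge That → ↑That ⊆ H → That.sup id < T.sup id →
      go f (T.sup id + 1) T = 1 - go f (T.sup id) That → False := by
    intro That hxl hsubH hsup heq
    have h1 : go f (T.sup id) That = go f (That.sup id + 1) That :=
      go_congr f _ _ _ (by omega) (by omega)
    have h2 : go f (That.sup id + 1) That = c := hc That hxl hsubH
    have e1 : c = go f (T.sup id + 1) T := hgTc.symm
    rw [heq, h1, h2] at e1
    revert e1
    fin_cases c <;> decide
  rcases lt_or_gt_of_ne hbne with hlt | hgt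
  · -- regressive case : b < m0
    have hin : b + 2 ≤ sInf (↑T : Set ℕ) := by rw [hminT]; omega
    rw [if_pos hin] at hgT0
    -- compute the erase set
    have hA : (T.erase (sInf (↑T : Set ℕ))).erase (T.sup id) = (s.erase m0).image (· + 1) := by
      rw [hminT, hsupT, hTdef]
      rw [Finset.erase_insert_of_ne (by have := hMs m0 hm0s; omega : M + 1 ≠ m0 + 1)]
      rw [Finset.erase_insert (by
        intro h
        exact hMnotim (Finset.mem_of_mem_erase h))]
      rw [Finset.image_erase (add_left_injective 1)]
    set A := (s.erase m0).image (· + 1) with hAdef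
    have hAcard : A.card = m0 := by
      rw [hAdef, Finset.card_image_of_injective _ (add_left_injective 1),
        Finset.card_erase_of_mem hm0s, hscard]
      omega
    have hAmem : ∀ y ∈ A, ∃ x ∈ s, x ≠ m0 ∧ y = x + 1 := by
      intro y hy
      obtain ⟨x, hx, rfl⟩ := Finset.mem_image.1 hy
      exact ⟨x, Finset.mem_of_mem_erase hx, (Finset.mem_erase.1 hx).1, rfl⟩
    set L := lowK A (b+1) with hLdef
    have hLsub := lowK_subset A (b+1)
    have hLcard : L.card = b + 1 := lowK_card A (b+1) (by omega)
    have hLbig : ∀ y ∈ L, b + 1 < y := by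
      intro y hy
      obtain ⟨x, hx, hxne, rfl⟩ := hAmem y (hLsub hy)
      have := hm0le x hx
      omega
    set That := insert (b+1) L with hThat
    have hnotmem : b + 1 ∉ L := fun h => absurd (hLbig _ h) (by omega)
    have hThatcard : That.card = b + 2 := by
      rw [hThat, Finset.card_insert_of_notMem hnotmem, hLcard]
    have hThatmin : sInf (↑That : Set ℕ) = b + 1 := by
      apply le_antisymm
      · exact Nat.sInf_le (by exact_mod_cast Finset.mem_insert_self _ _)
      · have hmemInf : sInf (↑That : Set ℕ) ∈ (↑That : Set ℕ) :=
          Nat.sInf_mem ⟨b+1, by exact_mod_cast Finset.mem_insert_self _ _⟩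
        rcases Finset.mem_insert.1 (by exact_mod_cast hmemInf) with h | h
        · omega
        · have := hLbig _ h; omega
    have hThatxl : ExLarge That := by
      refine ⟨⟨b+1, Finset.mem_insert_self _ _⟩, ?_⟩
      rw [hThatcard, hThatmin]; omega
    have hThatH : ↑That ⊆ H := by
      intro y hy
      rcases Finset.mem_insert.1 (by exact_mod_cast hy) with rfl | hy'
      · exact hbH
      · obtain ⟨x, hx, _, rfl⟩ := hAmem y (hLsub hy')
        exact hmem x hx
    have hThatsup : That.sup id < T.sup id := by
      rw [hsupT, hThat]
      rw [Finset.sup_lt_iff (by simp only [bot_eq_zero]; omega : (⊥ : ℕ) < M + 1)]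
      intro e he
      rcases Finset.mem_insert.1 he with rfl | he'
      · simp only [id]; omega
      · obtain ⟨x, hx, _, rfl⟩ := hAmem e (hLsub he')
        have := hMs x hx
        simp only [id]; omega
    exact key That hThatxl hThatH hThatsup (by rw [hgT0, hA])
  · -- non-regressive case : b > m0
    have hin : ¬ (b + 2 ≤ sInf (↑T : Set ℕ)) := by rw [hminT]; omega
    rw [if_neg hin] at hgT0
    set That := insert (b+1) (T.erase (T.sup id)) with hThat
    have hThat' : That = insert (b+1) (s.image (· + 1)) := by rw [hThat, heraseT]
    have hbnotim : b + 1 ∉ s.image (· + 1) := by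
      simp only [Finset.mem_image, not_exists]
      rintro x ⟨hx, hx1⟩
      have : b = x := by omega
      exact hbs (this ▸ hx)
    have hThatcard : That.card = m0 + 2 := by
      rw [hThat', Finset.card_insert_of_notMem hbnotim,
        Finset.card_image_of_injective _ (add_left_injective 1), hscard]
    have hThatmin : sInf (↑That : Set ℕ) = m0 + 1 := by
      rw [hThat']
      apply le_antisymm
      · exact Nat.sInf_le (by
          exact_mod_cast Finset.mem_insert_of_mem (Finset.mem_image.2 ⟨m0, hm0s, rfl⟩))
      · have hmemInf : sInf (↑(insert (b+1) (s.image (· + 1))) : Set ℕ) ∈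
            (↑(insert (b+1) (s.image (· + 1))) : Set ℕ) :=
          Nat.sInf_mem ⟨b+1, by exact_mod_cast Finset.mem_insert_self _ _⟩
        rcases Finset.mem_insert.1 (by exact_mod_cast hmemInf) with h | h
        · omega
        · obtain ⟨x, hx, hx1⟩ := Finset.mem_image.1 h
          have := hm0le x hx; omega
    have hThatxl : ExLarge That := by
      refine ⟨⟨b+1, by rw [hThat']; exact Finset.mem_insert_self _ _⟩, ?_⟩
      rw [hThatcard, hThatmin]; omega
    have hThatH : ↑That ⊆ H := by
      intro y hy
      rw [hThat'] at hy
      rcases Finset.mem_insert.1 (by exact_mod_cast hy) with rfl | hy'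
      · exact hbH
      · obtain ⟨x, hx, rfl⟩ := Finset.mem_image.1 hy'
        exact hmem x hx
    have hThatsup : That.sup id < T.sup id := by
      rw [hsupT, hThat']
      rw [Finset.sup_lt_iff (by simp only [bot_eq_zero]; omega : (⊥ : ℕ) < M + 1)]
      intro e he
      rcases Finset.mem_insert.1 he with rfl | he'
      · simp only [id]; omega
      · obtain ⟨x, hx, rfl⟩ := Finset.mem_image.1 he'
        have := hMs x hx
        simp only [id]; omega
    exact key That hThatxl hThatH hThatsup hgT0
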